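/- Let f be a polynomial over ℂ viewed as the map z ↦ f.eval z on ℂ, let U ⊆ ℂ be open and a ∈ ℂ, and suppose the sequence of iterates (f^[n])_{n} converges locally uniformly on U to the constant function a. Then for every λ ∈ ℂ with λ ≠ 0 and every compact set V ⊆ U, there exists N such that for all n ≥ N and all w ∈ V, (deriv (f^[n]))(w) ≠ λ. -/

import Mathlib

open Polynomial Filter

theorem stmt_7 (f : Polynomial ℂ) (U : Set ℂ) (hU : IsOpen U) (a : ℂ)
    (hconv : TendstoLocallyUniformlyOn (fun n => (fun z => f.eval z)^[n])
      (fun _ => a) atTop U) :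
    ∀ lam : ℂ, lam ≠ 0 → ∀ V : Set ℂ, IsCompact V → V ⊆ U →
      ∃ N : ℕ, ∀ n ≥ N, ∀ w ∈ V, deriv ((fun z => f.eval z)^[n]) w ≠ lam := by
  intro lam hlam V hV hVU
  have hdiff : ∀ᶠ n in atTop, DifferentiableOn ℂ ((fun z => f.eval z)^[n]) U :=
    Filter.Eventually.of_forall fun n =>
      ((f.differentiable.iterate n)).differentiableOn
  have hderiv : TendstoLocallyUniformlyOn
      (fun n => deriv ((fun z => f.eval z)^[n])) (deriv (fun _ => a)) atTop U :=
    hconv.deriv hdiff hU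
  have hd0 : deriv (fun _ : ℂ => a) = fun _ => 0 := by
    funext z; simp
  rw [hd0] at hderiv
  have hU2 := (tendstoLocallyUniformlyOn_iff_forall_isCompact hU).1 hderiv V hVU hV
  have := (Metric.tendstoUniformlyOn_iff.1 hU2) ‖lam‖
    (by simpa using hlam)
  rw [Filter.eventually_atTop] at this
  obtain ⟨N, hN⟩ := this
  refine ⟨N, fun n hn w hw heq => ?_⟩
  have := hN n hn w hw
  rw [heq] at this
  simp [Complex.dist_eq] at this
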